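/- Let f : X → X be a continuous map of a compact metric space, u : X → ℝⁿ continuous, and suppose for a fixed y ∈ X there is a sequence of points x_k ∈ X and a vector v ∈ ℝⁿ with lim_{k→∞} (1/k) Σ_{i=0}^{k-1} u(f^i(x_k)) = v. Then there exists an f-invariant Borel probability measure μ on X with ∫ u dμ = v. -/

import Mathlib

open MeasureTheory Filter Topology Set
open scoped ENNReal NNReal

namespace Stmt4Aux

noncomputable def ulim (U : Ultrafilter ℕ) (s : ℕ → ℝ) : ℝ := limUnder (U : Filter ℕ) s

lemma tendsto_ulim (U : Ultrafilter ℕ) {s : ℕ → ℝ} {C : ℝ} (h : ∀ k, |s k| ≤ C) :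
    Tendsto s (U : Filter ℕ) (nhds (ulim U s)) := by
  apply tendsto_nhds_limUnder
  have hmem : (↑(U.map s) : Filter ℝ) ≤ 𝓟 (Icc (-C) C) := by
    rw [le_principal_iff, Ultrafilter.coe_map, mem_map]
    exact univ_mem' fun k => abs_le.1 (h k)
  obtain ⟨c, -, hc⟩ := isCompact_Icc.ultrafilter_le_nhds (U.map s) hmem
  rw [Ultrafilter.coe_map] at hc
  exact ⟨c, hc⟩

variable {X : Type} [MetricSpace X] [CompactSpace X] [MeasurableSpace X] [BorelSpace X]
variable (U : Ultrafilter ℕ) (μs : ℕ → Measure X)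

noncomputable def mlim (s : Set X) : ℝ := ulim U fun k => (μs k s).toReal

variable (hle : ∀ k, μs k univ ≤ 1)
include hle

lemma measval_le_one (s : Set X) (k : ℕ) : (μs k s).toReal ≤ 1 := by
  have h : μs k s ≤ 1 := le_trans (measure_mono (subset_univ _)) (hle k)
  simpa using ENNReal.toReal_mono ENNReal.one_ne_top h

lemma tendsto_mlim (s : Set X) :
    Tendsto (fun k => (μs k s).toReal) (U : Filter ℕ) (nhds (mlim U μs s)) := by
  apply tendsto_ulim U (C := 1)
  intro k
  rw [abs_of_nonneg ENNReal.toReal_nonneg]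
  exact measval_le_one μs hle s k

lemma mlim_nonneg (s : Set X) : 0 ≤ mlim U μs s :=
  ge_of_tendsto' (tendsto_mlim U μs hle s) fun _ => ENNReal.toReal_nonneg

lemma mlim_mono {s t : Set X} (h : s ⊆ t) : mlim U μs s ≤ mlim U μs t := by
  refine le_of_tendsto_of_tendsto' (tendsto_mlim U μs hle s) (tendsto_mlim U μs hle t) fun k => ?_
  exact ENNReal.toReal_mono (lt_of_le_of_lt (le_trans (measure_mono (subset_univ _)) (hle k)) ENNReal.one_lt_top).ne (measure_mono h)

lemma measval_ne_top (s : Set X) (k : ℕ) : μs k s ≠ ⊤ :=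
  (lt_of_le_of_lt (le_trans (measure_mono (subset_univ _)) (hle k)) ENNReal.one_lt_top).ne

lemma mlim_union {s t : Set X} (hd : Disjoint s t) (ht : MeasurableSet t) :
    mlim U μs (s ∪ t) = mlim U μs s + mlim U μs t := by
  refine tendsto_nhds_unique (tendsto_mlim U μs hle (s ∪ t)) ?_
  have : ∀ k, (μs k (s ∪ t)).toReal = (μs k s).toReal + (μs k t).toReal := by
    intro k
    rw [measure_union hd ht, ENNReal.toReal_add (measval_ne_top μs hle s k) (measval_ne_top μs hle t k)]
  simp_rw [this]
  exact ((tendsto_mlim U μs hle s).add (tendsto_mlim U μs hle t))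

lemma mlim_union_le (s t : Set X) : mlim U μs (s ∪ t) ≤ mlim U μs s + mlim U μs t := by
  refine le_of_tendsto_of_tendsto' (tendsto_mlim U μs hle (s ∪ t))
    ((tendsto_mlim U μs hle s).add (tendsto_mlim U μs hle t)) fun k => ?_
  rw [← ENNReal.toReal_add (measval_ne_top μs hle s k) (measval_ne_top μs hle t k)]
  exact ENNReal.toReal_mono
    (ENNReal.add_ne_top.2 ⟨measval_ne_top μs hle s k, measval_ne_top μs hle t k⟩)
    (measure_union_le s t)

noncomputable def limCont : Content X where
  toFun K := (mlim U μs K).toNNReal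
  mono' K₁ K₂ h := Real.toNNReal_mono (mlim_mono U μs hle h)
  sup_disjoint' K₁ K₂ hd _ h₂ := by
    show (mlim U μs (↑K₁ ∪ ↑K₂)).toNNReal = (mlim U μs ↑K₁).toNNReal + (mlim U μs ↑K₂).toNNReal
    rw [mlim_union U μs hle hd h₂.measurableSet,
      Real.toNNReal_add (mlim_nonneg U μs hle _) (mlim_nonneg U μs hle _)]
  sup_le' K₁ K₂ := by
    show (mlim U μs (↑K₁ ∪ ↑K₂)).toNNReal ≤ (mlim U μs ↑K₁).toNNReal + (mlim U μs ↑K₂).toNNReal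
    rw [← Real.toNNReal_add (mlim_nonneg U μs hle _) (mlim_nonneg U μs hle _)]
    exact Real.toNNReal_mono (mlim_union_le U μs hle _ _)

noncomputable def limMeasure : Measure X := (limCont U μs hle).measure

lemma limCont_apply (K : TopologicalSpace.Compacts X) :
    (limCont U μs hle) K = ENNReal.ofReal (mlim U μs K) := rfl

lemma limMeasure_open_le {O : Set X} (hO : IsOpen O) :
    limMeasure U μs hle O ≤ ENNReal.ofReal (mlim U μs O) := by
  rw [limMeasure, Content.measure_apply _ hO.measurableSet,
    Content.outerMeasure_of_isOpen _ O hO]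
  refine iSup₂_le fun K hK => ?_
  rw [limCont_apply]
  exact ENNReal.ofReal_le_ofReal (mlim_mono U μs hle hK)


lemma mlim_univ (hU : (U : Filter ℕ) ≤ atTop) (hone : ∀ᶠ k in atTop, μs k univ = 1) :
    mlim U μs univ = 1 := by
  refine tendsto_nhds_unique (tendsto_mlim U μs hle univ) ?_
  have h' : ∀ᶠ k in (U : Filter ℕ), (μs k univ).toReal = 1 :=
    (hone.filter_mono hU).mono fun k hk => by simp [hk]
  exact Tendsto.congr' (h'.mono fun k hk => hk.symm) tendsto_const_nhds

lemma limMeasure_univ (hU : (U : Filter ℕ) ≤ atTop) (hone : ∀ᶠ k in atTop, μs k univ = 1) :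
    limMeasure U μs hle univ = 1 := by
  rw [limMeasure, Content.measure_apply _ MeasurableSet.univ,
    Content.outerMeasure_of_isOpen _ univ isOpen_univ]
  apply le_antisymm
  · refine iSup₂_le fun K hK => ?_
    rw [limCont_apply]
    calc ENNReal.ofReal (mlim U μs ↑K) ≤ ENNReal.ofReal (mlim U μs univ) :=
          ENNReal.ofReal_le_ofReal (mlim_mono U μs hle (subset_univ _))
      _ = 1 := by rw [mlim_univ U μs hle hU hone, ENNReal.ofReal_one]
  · refine le_trans ?_ (Content.le_innerContent (limCont U μs hle) ⟨univ, isCompact_univ⟩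
      ⟨univ, isOpen_univ⟩ (subset_refl _))
    rw [limCont_apply U μs hle ⟨univ, isCompact_univ⟩]
    simp only [TopologicalSpace.Compacts.coe_mk]
    rw [mlim_univ U μs hle hU hone, ENNReal.ofReal_one]

lemma isProbabilityMeasure_limMeasure (hU : (U : Filter ℕ) ≤ atTop)
    (hone : ∀ᶠ k in atTop, μs k univ = 1) :
    IsProbabilityMeasure (limMeasure U μs hle) :=
  ⟨limMeasure_univ U μs hle hU hone⟩

omit hle

lemma card_le (c : ℝ) (hc : 0 ≤ c) (T : ℕ) :
    ((((Finset.Icc 1 T).filter (fun j : ℕ => (j : ℝ) < c)).card : ℝ)) ≤ c := by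
  classical
  by_cases h1 : c ≤ 1
  · have hempty : (Finset.Icc 1 T).filter (fun j : ℕ => (j : ℝ) < c) = ∅ := by
      refine Finset.filter_false_of_mem fun j hj => ?_
      have h1j : 1 ≤ j := (Finset.mem_Icc.1 hj).1
      exact not_lt.2 (le_trans h1 (by exact_mod_cast h1j))
    simp [hempty, hc]
  · push_neg at h1
    have hone : 1 ≤ ⌈c⌉₊ := Nat.one_le_ceil_iff.2 (by linarith)
    have hsub : (Finset.Icc 1 T).filter (fun j : ℕ => (j : ℝ) < c) ⊆ Finset.Icc 1 (⌈c⌉₊ - 1) := by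
      intro j hj
      rw [Finset.mem_filter, Finset.mem_Icc] at hj
      rw [Finset.mem_Icc]
      refine ⟨hj.1.1, ?_⟩
      have hj2 : j < ⌈c⌉₊ := Nat.lt_ceil.2 hj.2
      omega
    have hcard := Finset.card_le_card hsub
    rw [Nat.card_Icc] at hcard
    have hcast : ((((Finset.Icc 1 T).filter (fun j : ℕ => (j : ℝ) < c)).card : ℝ))
        ≤ ((⌈c⌉₊ - 1 : ℕ) : ℝ) := by exact_mod_cast (by omega : ((Finset.Icc 1 T).filter (fun j : ℕ => (j : ℝ) < c)).card ≤ ⌈c⌉₊ - 1)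
    refine hcast.trans ?_
    have h2 : ((⌈c⌉₊ - 1 : ℕ) : ℝ) = (⌈c⌉₊ : ℝ) - 1 := by
      have : (1:ℕ) ≤ ⌈c⌉₊ := hone
      push_cast [this]
      ring
    rw [h2]
    have := Nat.ceil_lt_add_one hc
    linarith

lemma le_card (c : ℝ) (T : ℕ) (hcT : c ≤ T) :
    c - 1 ≤ ((((Finset.Icc 1 T).filter (fun j : ℕ => (j : ℝ) < c)).card : ℝ)) := by
  classical
  by_cases h1 : c ≤ 1
  · have : (0:ℝ) ≤ (((Finset.Icc 1 T).filter (fun j : ℕ => (j : ℝ) < c)).card : ℝ) := by positivity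
    linarith
  · push_neg at h1
    have hone : 1 ≤ ⌈c⌉₊ := Nat.one_le_ceil_iff.2 (by linarith)
    have hceilT : ⌈c⌉₊ ≤ T := Nat.ceil_le.2 hcT
    have hsub : Finset.Icc 1 (⌈c⌉₊ - 1) ⊆ (Finset.Icc 1 T).filter (fun j : ℕ => (j : ℝ) < c) := by
      intro j hj
      rw [Finset.mem_Icc] at hj
      rw [Finset.mem_filter, Finset.mem_Icc]
      refine ⟨⟨hj.1, by omega⟩, ?_⟩
      exact Nat.lt_ceil.1 (by omega)
    have hcard := Finset.card_le_card hsub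
    rw [Nat.card_Icc] at hcard
    have h2 : ((⌈c⌉₊ - 1 : ℕ) : ℝ) = (⌈c⌉₊ : ℝ) - 1 := by
      have : (1:ℕ) ≤ ⌈c⌉₊ := hone
      push_cast [this]
      ring
    have hcast : ((⌈c⌉₊ - 1 : ℕ) : ℝ) ≤ (((Finset.Icc 1 T).filter (fun j : ℕ => (j : ℝ) < c)).card : ℝ) := by
      exact_mod_cast (by omega : ⌈c⌉₊ - 1 ≤ ((Finset.Icc 1 T).filter (fun j : ℕ => (j : ℝ) < c)).card)
    have := Nat.le_ceil c
    linarith [hcast, h2 ▸ hcast]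

include hle

lemma integral_limMeasure_le (hU : (U : Filter ℕ) ≤ atTop)
    (hone : ∀ᶠ k in atTop, μs k univ = 1)
    {g : X → ℝ} (hg : Continuous g) (hg0 : ∀ z, 0 ≤ g z) {C : ℝ} (hgC : ∀ z, g z ≤ C)
    {l : ℝ} (hl : Tendsto (fun k => ∫ z, g z ∂(μs k)) (U : Filter ℕ) (nhds l)) :
    ∫ z, g z ∂(limMeasure U μs hle) ≤ l := by
  classical
  set μ := limMeasure U μs hle with hμ
  haveI hprob : IsProbabilityMeasure μ := isProbabilityMeasure_limMeasure U μs hle hU hone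
  have hfin : ∀ k, IsFiniteMeasure (μs k) :=
    fun k => ⟨lt_of_le_of_lt (hle k) ENNReal.one_lt_top⟩
  have hcs : HasCompactSupport g := (isClosed_tsupport g).isCompact
  refine le_of_forall_pos_le_add fun ε hε => ?_
  obtain ⟨N, hN⟩ := exists_nat_one_div_lt hε
  set δ : ℝ := ((N : ℝ) + 1)⁻¹ with hδ
  have hδpos : 0 < δ := by positivity
  have hδN : δ * ((N : ℝ) + 1) = 1 := inv_mul_cancel₀ (by positivity)
  set T : ℕ := ⌈C⌉₊ * (N + 1) with hT
  set S : ℕ → Set X := fun j => {z | (j : ℝ) * δ < g z} with hS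
  have hSopen : ∀ j, IsOpen (S j) := fun j => isOpen_lt continuous_const hg
  have hSmeas : ∀ j, MeasurableSet (S j) := fun j => (hSopen j).measurableSet
  set stepF : X → ℝ := fun z => ∑ j ∈ Finset.Icc 1 T, (S j).indicator (fun _ => δ) z with hstepF
  have hcard : ∀ z, stepF z
      = δ * ((((Finset.Icc 1 T).filter (fun j : ℕ => (j : ℝ) < g z * ((N : ℝ) + 1))).card : ℝ)) := by
    intro z
    have hiff : ∀ j : ℕ, z ∈ S j ↔ ((j : ℝ) < g z * ((N : ℝ) + 1)) := by
      intro j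
      rw [hS]
      simp only [mem_setOf_eq]
      constructor
      · intro h; nlinarith
      · intro h; nlinarith
    have heach : ∀ j : ℕ, (S j).indicator (fun _ => δ) z
        = if (j : ℝ) < g z * ((N : ℝ) + 1) then δ else 0 := by
      intro j
      rw [Set.indicator_apply, if_congr (hiff j) rfl rfl]
    calc stepF z = ∑ j ∈ Finset.Icc 1 T, if (j : ℝ) < g z * ((N : ℝ) + 1) then δ else 0 := by
          rw [hstepF]; exact Finset.sum_congr rfl fun j _ => heach j
      _ = δ * ∑ j ∈ Finset.Icc 1 T, if (j : ℝ) < g z * ((N : ℝ) + 1) then (1:ℝ) else 0 := by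
          rw [Finset.mul_sum]
          exact Finset.sum_congr rfl fun j _ => by rw [mul_ite, mul_one, mul_zero]
      _ = _ := by rw [Finset.sum_boole]
  have hstep_int : ∀ (ν : Measure X) [IsFiniteMeasure ν], Integrable stepF ν := by
    intro ν _
    exact integrable_finset_sum _ fun j _ =>
      (integrable_indicator_iff (hSmeas j)).2 (integrableOn_const (measure_ne_top ν _))
  have hstep_integral : ∀ (ν : Measure X) [IsFiniteMeasure ν],
      ∫ z, stepF z ∂ν = ∑ j ∈ Finset.Icc 1 T, (ν (S j)).toReal * δ := by
    intro ν _
    rw [hstepF]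
    rw [integral_finset_sum _ (fun j _ =>
      (integrable_indicator_iff (hSmeas j)).2 (integrableOn_const (measure_ne_top ν _)))]
    exact Finset.sum_congr rfl fun j _ => by
      rw [integral_indicator_const δ (hSmeas j), smul_eq_mul]; rfl
  have hgint : ∀ (ν : Measure X) [IsFiniteMeasure ν], Integrable g ν := by
    intro ν _
    exact hg.integrable_of_hasCompactSupport hcs
  have hub : ∀ z, g z ≤ δ + stepF z := by
    intro z
    rw [hcard z]
    have hcT : g z * ((N : ℝ) + 1) ≤ (T : ℝ) := by
      have h1 : g z ≤ (⌈C⌉₊ : ℝ) := (hgC z).trans (Nat.le_ceil C)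
      have h2 : (T : ℝ) = (⌈C⌉₊ : ℝ) * ((N : ℝ) + 1) := by rw [hT]; push_cast; ring
      rw [h2]
      nlinarith
    have h1 := le_card (g z * ((N : ℝ) + 1)) T hcT
    nlinarith
  have hlb : ∀ z, stepF z ≤ g z := by
    intro z
    rw [hcard z]
    have h2 := card_le (g z * ((N : ℝ) + 1)) (by nlinarith [hg0 z]) T
    nlinarith
  have hd : ∀ k, ∑ j ∈ Finset.Icc 1 T, ((μs k) (S j)).toReal * δ ≤ ∫ z, g z ∂(μs k) := by
    intro k
    haveI := hfin k
    rw [← hstep_integral (μs k)]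
    exact integral_mono (hstep_int (μs k)) (hgint (μs k)) hlb
  have he : Tendsto (fun k => ∑ j ∈ Finset.Icc 1 T, ((μs k) (S j)).toReal * δ) (U : Filter ℕ)
      (nhds (∑ j ∈ Finset.Icc 1 T, mlim U μs (S j) * δ)) :=
    tendsto_finset_sum _ fun j _ => (tendsto_mlim U μs hle (S j)).mul_const δ
  have he' : ∑ j ∈ Finset.Icc 1 T, mlim U μs (S j) * δ ≤ l :=
    le_of_tendsto_of_tendsto' he hl hd
  have hf : ∫ z, g z ∂μ ≤ δ + ∑ j ∈ Finset.Icc 1 T, (μ (S j)).toReal * δ := by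
    have hmono : ∫ z, g z ∂μ ≤ ∫ z, (δ + stepF z) ∂μ :=
      integral_mono (hgint μ) ((integrable_const δ).add (hstep_int μ)) hub
    rwa [integral_add (integrable_const δ) (hstep_int μ), integral_const, probReal_univ,
      one_smul, hstep_integral μ] at hmono
  have hg' : ∀ j, (μ (S j)).toReal ≤ mlim U μs (S j) := fun j =>
    ENNReal.toReal_le_of_le_ofReal (mlim_nonneg U μs hle _) (limMeasure_open_le U μs hle (hSopen j))
  have hsum : ∑ j ∈ Finset.Icc 1 T, (μ (S j)).toReal * δ
      ≤ ∑ j ∈ Finset.Icc 1 T, mlim U μs (S j) * δ :=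
    Finset.sum_le_sum fun j _ => mul_le_mul_of_nonneg_right (hg' j) hδpos.le
  have hδε : δ < ε := by rw [hδ, ← one_div]; exact hN
  linarith


omit hle

lemma cont_integrable {E : Type*} [NormedAddCommGroup E] (ν : Measure X) [IsFiniteMeasure ν]
    {g : X → E} (hg : Continuous g) : Integrable g ν :=
  hg.integrable_of_hasCompactSupport (isClosed_tsupport g).isCompact

include hle

lemma tendsto_integral_limMeasure (hU : (U : Filter ℕ) ≤ atTop)
    (hone : ∀ᶠ k in atTop, μs k univ = 1)
    {g : X → ℝ} (hg : Continuous g) :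
    Tendsto (fun k => ∫ z, g z ∂(μs k)) (U : Filter ℕ)
      (nhds (∫ z, g z ∂(limMeasure U μs hle))) := by
  set μ := limMeasure U μs hle with hμ
  haveI hprob : IsProbabilityMeasure μ := isProbabilityMeasure_limMeasure U μs hle hU hone
  have hfin : ∀ k, IsFiniteMeasure (μs k) :=
    fun k => ⟨lt_of_le_of_lt (hle k) ENNReal.one_lt_top⟩
  obtain ⟨C0, hC0⟩ : ∃ C0, ∀ w ∈ range g, ‖w‖ ≤ C0 :=
    (isCompact_range hg).isBounded.exists_norm_le
  set C := max C0 0 with hCdef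
  have hC : ∀ z, |g z| ≤ C := fun z =>
    le_trans (hC0 _ (mem_range_self z)) (le_max_left _ _)
  have hCnn : 0 ≤ C := le_max_right _ _
  have hbd : ∀ k, |∫ z, g z ∂(μs k)| ≤ C := by
    intro k
    haveI := hfin k
    have h1 := norm_integral_le_of_norm_le_const (μ := μs k) (f := fun z => g z) (C := C)
      (Eventually.of_forall fun z => by simpa [Real.norm_eq_abs] using hC z)
    rw [Real.norm_eq_abs] at h1
    refine h1.trans ?_
    have h2 := measval_le_one μs hle univ k
    nlinarith [ENNReal.toReal_nonneg (a := μs k univ), show (μs k).real univ = (μs k univ).toReal from rfl]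
  set l := ulim U (fun k => ∫ z, g z ∂(μs k)) with hldef
  have hl : Tendsto (fun k => ∫ z, g z ∂(μs k)) (U : Filter ℕ) (nhds l) := tendsto_ulim U hbd
  have honeU : Tendsto (fun k => (μs k univ).toReal) (U : Filter ℕ) (nhds 1) := by
    have h' : ∀ᶠ k in (U : Filter ℕ), (1:ℝ) = (μs k univ).toReal :=
      (hone.filter_mono hU).mono fun k hk => by simp [hk]
    exact Tendsto.congr' h' tendsto_const_nhds
  have hgint : ∀ k, Integrable g (μs k) := fun k => by
    haveI := hfin k; exact cont_integrable (μs k) hg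
  -- upper bound : ∫ g dμ ≤ l
  have hup : ∫ z, g z ∂μ ≤ l := by
    have hplus : ∀ k, ∫ z, (g z + C) ∂(μs k)
        = (∫ z, g z ∂(μs k)) + (μs k univ).toReal * C := by
      intro k
      haveI := hfin k
      rw [integral_add (hgint k) (integrable_const C), integral_const, smul_eq_mul]; rfl
    have h1 : Tendsto (fun k => ∫ z, (g z + C) ∂(μs k)) (U : Filter ℕ) (nhds (l + 1 * C)) := by
      refine Tendsto.congr (fun k => (hplus k).symm) (hl.add (honeU.mul_const C))
    have h2 := integral_limMeasure_le U μs hle hU hone (hg.add continuous_const)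
      (fun z => by show 0 ≤ g z + C; linarith [(abs_le.1 (hC z)).1]) (C := 2 * C)
      (fun z => by show g z + C ≤ 2 * C; linarith [(abs_le.1 (hC z)).2]) h1
    have h3 : ∫ z, (g z + C) ∂μ = (∫ z, g z ∂μ) + C := by
      rw [integral_add (cont_integrable μ hg) (integrable_const C), integral_const, probReal_univ,
        one_smul]
    replace h2 : ∫ z, (g z + C) ∂μ ≤ l + 1 * C := h2
    rw [h3] at h2
    linarith
  -- lower bound : l ≤ ∫ g dμ
  have hlo : l ≤ ∫ z, g z ∂μ := by
    have hminus : ∀ k, ∫ z, (C - g z) ∂(μs k)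
        = (μs k univ).toReal * C - ∫ z, g z ∂(μs k) := by
      intro k
      haveI := hfin k
      rw [integral_sub (integrable_const C) (hgint k), integral_const, smul_eq_mul]; rfl
    have h1 : Tendsto (fun k => ∫ z, (C - g z) ∂(μs k)) (U : Filter ℕ) (nhds (1 * C - l)) := by
      refine Tendsto.congr (fun k => (hminus k).symm) ((honeU.mul_const C).sub hl)
    have h2 := integral_limMeasure_le U μs hle hU hone (continuous_const.sub hg)
      (fun z => by show 0 ≤ C - g z; linarith [(abs_le.1 (hC z)).2]) (C := 2 * C)
      (fun z => by show C - g z ≤ 2 * C; linarith [(abs_le.1 (hC z)).1]) h1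
    have h3 : ∫ z, (C - g z) ∂μ = C - ∫ z, g z ∂μ := by
      rw [integral_sub (integrable_const C) (cont_integrable μ hg), integral_const, probReal_univ,
        one_smul]
    replace h2 : ∫ z, (C - g z) ∂μ ≤ 1 * C - l := h2
    rw [h3] at h2
    linarith
  have : l = ∫ z, g z ∂μ := le_antisymm hlo hup
  rwa [this] at hl

omit hle

noncomputable def orbMeas (f : X → X) (x : ℕ → X) (k : ℕ) : Measure X :=
  (k : ℝ≥0∞)⁻¹ • ∑ i ∈ Finset.range k, Measure.dirac (f^[i] (x k))

lemma orbMeas_univ (f : X → X) (x : ℕ → X) {k : ℕ} (hk : k ≠ 0) :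
    orbMeas f x k univ = 1 := by
  rw [orbMeas, Measure.smul_apply, Measure.finset_sum_apply]
  simp only [measure_univ, Finset.sum_const, Finset.card_range, nsmul_eq_mul, mul_one,
    smul_eq_mul]
  exact ENNReal.inv_mul_cancel (by exact_mod_cast hk) (ENNReal.natCast_ne_top k)

lemma orbMeas_le_one (f : X → X) (x : ℕ → X) (k : ℕ) : orbMeas f x k univ ≤ 1 := by
  rcases Nat.eq_zero_or_pos k with hk | hk
  · subst hk
    simp [orbMeas]
  · rw [orbMeas_univ f x hk.ne']

lemma orbMeas_integral {E : Type*} [NormedAddCommGroup E] [NormedSpace ℝ E] [CompleteSpace E]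
    (f : X → X) (x : ℕ → X) (k : ℕ) {g : X → E} (hg : Continuous g) :
    ∫ z, g z ∂(orbMeas f x k) = (k : ℝ)⁻¹ • ∑ i ∈ Finset.range k, g (f^[i] (x k)) := by
  have hint : ∀ i ∈ Finset.range k, Integrable g (Measure.dirac (f^[i] (x k))) :=
    fun i _ => cont_integrable _ hg
  rw [orbMeas, integral_smul_measure, integral_finset_sum_measure hint]
  congr 1
  · rw [ENNReal.toReal_inv, ENNReal.toReal_natCast]
  · exact Finset.sum_congr rfl fun i _ => integral_dirac g _

end Stmt4Aux

/-- If the Cesàro averages of `u` along orbits of points `x k` converge to `v`, then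
there is an `f`-invariant Borel probability measure `μ` with `∫ u dμ = v`. -/
theorem stmt4 {n : ℕ} {X : Type} [MetricSpace X] [CompactSpace X]
    [MeasurableSpace X] [BorelSpace X]
    (f : X → X) (hf : Continuous f)
    (u : X → EuclideanSpace ℝ (Fin n)) (hu : Continuous u)
    (y : X) (x : ℕ → X) (v : EuclideanSpace ℝ (Fin n))
    (hlim : Tendsto (fun k : ℕ => (k : ℝ)⁻¹ • ∑ i ∈ Finset.range k, u (f^[i] (x k)))
      atTop (nhds v)) :
    ∃ μ : Measure X, IsProbabilityMeasure μ ∧ Measure.map f μ = μ ∧ ∫ z, u z ∂μ = v := by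
  classical
  set U : Ultrafilter ℕ := Ultrafilter.of atTop with hUdef
  have hU : (U : Filter ℕ) ≤ atTop := Ultrafilter.of_le _
  set μs : ℕ → Measure X := Stmt4Aux.orbMeas f x with hμs
  have hle : ∀ k, μs k Set.univ ≤ 1 := fun k => Stmt4Aux.orbMeas_le_one f x k
  have hone : ∀ᶠ k in atTop, μs k Set.univ = 1 := by
    filter_upwards [eventually_ge_atTop 1] with k hk
    exact Stmt4Aux.orbMeas_univ f x (by omega)
  set μ := Stmt4Aux.limMeasure U μs hle with hμdef
  haveI hprob : IsProbabilityMeasure μ :=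
    Stmt4Aux.isProbabilityMeasure_limMeasure U μs hle hU hone
  have hfin : ∀ k, IsFiniteMeasure (μs k) :=
    fun k => ⟨lt_of_le_of_lt (hle k) ENNReal.one_lt_top⟩
  have key : ∀ g : X → ℝ, Continuous g →
      Tendsto (fun k => ∫ z, g z ∂(μs k)) (U : Filter ℕ) (nhds (∫ z, g z ∂μ)) :=
    fun g hg => Stmt4Aux.tendsto_integral_limMeasure U μs hle hU hone hg
  refine ⟨μ, hprob, ?_, ?_⟩
  · -- invariance
    haveI : IsProbabilityMeasure (Measure.map f μ) :=
      Measure.isProbabilityMeasure_map hf.measurable.aemeasurable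
    apply ext_of_forall_lintegral_eq_of_IsFiniteMeasure
    intro F
    have hFc : Continuous fun z => ((F z : ℝ)) := NNReal.continuous_coe.comp F.continuous
    have hFfc : Continuous fun z => ((F (f z) : ℝ)) := hFc.comp hf
    rw [lintegral_map F.continuous.measurable.coe_nnreal_ennreal hf.measurable]
    rw [lintegral_coe_eq_integral (fun z => F (f z)) (Stmt4Aux.cont_integrable μ hFfc),
      lintegral_coe_eq_integral (fun z => F z) (Stmt4Aux.cont_integrable μ hFc)]
    congr 1
    -- telescoping identity
    have hdiff : ∀ k, ∫ z, ((F (f z)) : ℝ) ∂(μs k)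
        = (∫ z, ((F z) : ℝ) ∂(μs k))
          + (k : ℝ)⁻¹ • (((F (f^[k] (x k)) : ℝ)) - ((F (x k) : ℝ))) := by
      intro k
      rw [hμs, Stmt4Aux.orbMeas_integral f x k hFfc, Stmt4Aux.orbMeas_integral f x k hFc]
      have hre : ∑ i ∈ Finset.range k, ((F (f (f^[i] (x k))) : ℝ))
          = ∑ i ∈ Finset.range k, ((F (f^[i+1] (x k)) : ℝ)) :=
        Finset.sum_congr rfl fun i _ => by rw [← Function.iterate_succ_apply' f i]
      rw [hre, ← smul_add]
      congr 1
      have tele := Finset.sum_range_sub (fun i => ((F (f^[i] (x k)) : ℝ))) k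
      rw [Finset.sum_sub_distrib] at tele
      have h0 : f^[0] (x k) = x k := rfl
      simp only [h0] at tele
      linarith
    obtain ⟨Cb, hCb⟩ := F.bounded
    set D : ℝ := (F y : ℝ) + |Cb| with hDdef
    have hD : ∀ z, ((F z : ℝ)) ≤ D := by
      intro z
      have h1 := hCb z y
      rw [NNReal.dist_eq] at h1
      have h2 := abs_le.1 (h1.trans (le_abs_self Cb))
      rw [hDdef]
      linarith [h2.2]
    have hD0 : 0 ≤ D := le_trans (F y).coe_nonneg (hD y)
    have hzero : Tendsto
        (fun k : ℕ => (k : ℝ)⁻¹ • (((F (f^[k] (x k)) : ℝ)) - ((F (x k) : ℝ)))) atTop (nhds 0) := by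
      apply squeeze_zero_norm (a := fun k : ℕ => (k : ℝ)⁻¹ * (2 * D))
      · intro k
        rw [norm_smul, Real.norm_eq_abs (r := ((k:ℝ))⁻¹), abs_of_nonneg (by positivity)]
        refine mul_le_mul_of_nonneg_left ?_ (by positivity)
        rw [Real.norm_eq_abs]
        rw [abs_sub_le_iff]
        constructor
        · linarith [hD (f^[k] (x k)), (F (x k)).coe_nonneg, hD (x k)]
        · linarith [hD (x k), (F (f^[k] (x k))).coe_nonneg]
      · have := tendsto_inv_atTop_nhds_zero_nat.mul_const (2 * D)
        simpa using this
    have t2 := key (fun z => ((F z) : ℝ)) hFc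
    have t1 := key (fun z => ((F (f z)) : ℝ)) hFfc
    have t1' : Tendsto (fun k => ∫ z, ((F (f z)) : ℝ) ∂(μs k)) (U : Filter ℕ)
        (nhds ((∫ z, ((F z) : ℝ) ∂μ) + 0)) :=
      Tendsto.congr (fun k => (hdiff k).symm) (t2.add (hzero.mono_left hU))
    have := tendsto_nhds_unique t1 t1'
    rw [this, add_zero]
  · -- integral of u
    have hu_int : Integrable u μ := Stmt4Aux.cont_integrable μ hu
    apply PiLp.ext
    intro j
    set L : EuclideanSpace ℝ (Fin n) →L[ℝ] ℝ := EuclideanSpace.proj j with hL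
    have hcoord : Continuous fun z => L (u z) := L.continuous.comp hu
    have h1 : ∫ z, L (u z) ∂μ = L (∫ z, u z ∂μ) :=
      L.integral_comp_comm hu_int
    have h2 : ∀ k, ∫ z, L (u z) ∂(μs k) = L ((k : ℝ)⁻¹ • ∑ i ∈ Finset.range k, u (f^[i] (x k))) := by
      intro k
      haveI := hfin k
      rw [hμs, L.integral_comp_comm (Stmt4Aux.cont_integrable _ hu),
        Stmt4Aux.orbMeas_integral f x k hu]
    have h3 : Tendsto (fun k => ∫ z, L (u z) ∂(μs k)) (U : Filter ℕ) (nhds (L v)) := by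
      refine Tendsto.congr (fun k => (h2 k).symm) ?_
      exact ((L.continuous.tendsto v).comp hlim).mono_left hU
    have h4 := key (fun z => L (u z)) hcoord
    have h5 := tendsto_nhds_unique h4 h3
    rw [h1] at h5
    exact h5
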